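/- Let A, B_k be symmetric n×n real matrices with s_kᵀy_k ≠ 0 and s_kᵀB_k s_k ≠ 0, where y_k = A s_k, and let B_{k+1} be given by the Broyden family update B_{k+1} = B_k + y_k y_kᵀ/(s_kᵀy_k) − B_k s_k s_kᵀB_k/(s_kᵀB_k s_k) + θ ω_k ω_kᵀ with ω_k = √(s_kᵀB_k s_k)(y_k/(s_kᵀy_k) − B_k s_k/(s_kᵀB_k s_k)). If ξ ∈ ℝⁿ satisfies (B_k − A)ξ = 0 and s_kᵀAξ = 0, then (B_{k+1} − A)ξ = 0. -/
import Mathlib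

open Matrix

lemma vecMulVec_mulVec' {n : ℕ} (w v ξ : Fin n → ℝ) :
    vecMulVec w v *ᵥ ξ = (v ⬝ᵥ ξ) • w := by
  funext i
  simp [vecMulVec, mulVec, dotProduct, Finset.mul_sum, mul_assoc, mul_comm, mul_left_comm]

/-- Kernel preservation for the Broyden family update: if (B_k − A)ξ = 0 and
s_kᵀAξ = 0, then (B_{k+1} − A)ξ = 0. -/
theorem stmt_18 (n : ℕ) (A Bk : Matrix (Fin n) (Fin n) ℝ)
    (hA : A.IsSymm) (hBk : Bk.IsSymm) (θ : ℝ)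
    (s : Fin n → ℝ) (y : Fin n → ℝ) (hy : y = A *ᵥ s)
    (hsy : s ⬝ᵥ y ≠ 0) (hsBs : s ⬝ᵥ (Bk *ᵥ s) ≠ 0)
    (ω : Fin n → ℝ)
    (hω : ω = Real.sqrt (s ⬝ᵥ (Bk *ᵥ s)) •
      ((s ⬝ᵥ y)⁻¹ • y - (s ⬝ᵥ (Bk *ᵥ s))⁻¹ • (Bk *ᵥ s)))
    (Bk1 : Matrix (Fin n) (Fin n) ℝ)
    (hBk1 : Bk1 = Bk + (s ⬝ᵥ y)⁻¹ • vecMulVec y y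
      - (s ⬝ᵥ (Bk *ᵥ s))⁻¹ • vecMulVec (Bk *ᵥ s) (Bk *ᵥ s)
      + θ • vecMulVec ω ω)
    (ξ : Fin n → ℝ) (hker : (Bk - A) *ᵥ ξ = 0) (horth : s ⬝ᵥ (A *ᵥ ξ) = 0) :
    (Bk1 - A) *ᵥ ξ = 0 := by
  have hBξ : Bk *ᵥ ξ = A *ᵥ ξ := by
    have := hker
    rw [sub_mulVec, sub_eq_zero] at this
    exact this
  have hyξ : y ⬝ᵥ ξ = 0 := by
    rw [hy]
    calc (A *ᵥ s) ⬝ᵥ ξ = (Aᵀ *ᵥ s) ⬝ᵥ ξ := by rw [hA.eq]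
    _ = (s ᵥ* A) ⬝ᵥ ξ := by rw [mulVec_transpose]
    _ = s ⬝ᵥ (A *ᵥ ξ) := by rw [dotProduct_mulVec]
    _ = 0 := horth
  have hBsξ : (Bk *ᵥ s) ⬝ᵥ ξ = 0 := by
    calc (Bk *ᵥ s) ⬝ᵥ ξ = (Bkᵀ *ᵥ s) ⬝ᵥ ξ := by rw [hBk.eq]
    _ = (s ᵥ* Bk) ⬝ᵥ ξ := by rw [mulVec_transpose]
    _ = s ⬝ᵥ (Bk *ᵥ ξ) := by rw [dotProduct_mulVec]
    _ = 0 := by rw [hBξ]; exact horth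
  have hωξ : ω ⬝ᵥ ξ = 0 := by
    simp [hω, sub_dotProduct, smul_dotProduct, hyξ, hBsξ]
  rw [hBk1]
  simp only [sub_mulVec, add_mulVec, smul_mulVec, vecMulVec_mulVec',
    hyξ, hBsξ, hωξ, hBξ, zero_smul, smul_zero]
  simp
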